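/- Let (X, cl) be a finitary matroid with rank rk, δ a quasi-endomorphism, and suppose a ∈ cl^δ(B) where B ⊆ X. Then there exist natural numbers n and m such that δᵏa ∈ cl(J^{n−1}(a) ∪ J^{m+k}(B)) for all k ≥ n. -/

import Mathlib

/-- A finitary matroid (pregeometry) on a type `X`, given by a closure operator. -/
structure Pregeometry (X : Type*) where
  cl : Set X → Set X
  subset_cl : ∀ A : Set X, A ⊆ cl A
  mono : ∀ A B : Set X, A ⊆ B → cl A ⊆ cl B
  cl_cl : ∀ A : Set X, cl (cl A) = cl A
  finitary : ∀ (A : Set X) (a : X), a ∈ cl A → ∃ F : Finset X, ↑F ⊆ A ∧ a ∈ cl ↑F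
  exchange : ∀ (a b : X) (A : Set X), a ∈ cl (A ∪ {b}) → a ∉ cl A → b ∈ cl (A ∪ {a})

/-- `S` is independent over `B` with respect to a closure operator. -/
def clIndep {X : Type*} (cl : Set X → Set X) (B S : Set X) : Prop :=
  ∀ s ∈ S, s ∉ cl (B ∪ (S \ {s}))

/-- The rank of `A` over `B` with respect to a closure operator: the supremum of the
cardinalities of subsets of `A` independent over `B`. -/
noncomputable def clRank {X : Type*} (cl : Set X → Set X) (A B : Set X) : Cardinal :=
  ⨆ S : {S : Set X // S ⊆ A ∧ clIndep cl B S}, Cardinal.mk S.1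

/-- The set of all iterated images `δⁱ a` for `a ∈ A`, `i < ω` (the infinite jet). -/
def Jinf {X : Type*} (δ : X → X) (A : Set X) : Set X :=
  ⋃ a ∈ A, Set.range fun i : ℕ => δ^[i] a

/-- The jet `{δⁱ a : a ∈ A, i ≤ n}`. -/
def Jle {X : Type*} (δ : X → X) (A : Set X) (n : ℕ) : Set X :=
  ⋃ a ∈ A, (fun i : ℕ => δ^[i] a) '' {i | i ≤ n}

/-- The jet `{δⁱ a : a ∈ A, i < n}` (so `Jlt δ A 0 = ∅`, playing the role of `J^{-1}`). -/
def Jlt {X : Type*} (δ : X → X) (A : Set X) (n : ℕ) : Set X :=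
  ⋃ a ∈ A, (fun i : ℕ => δ^[i] a) '' {i | i < n}

/-- `δ` is a quasi-endomorphism of the pregeometry `P`:
`rk(δA | A ∪ B ∪ δB) ≤ rk(A | B)` for all `A, B`. -/
def IsQuasiEndo {X : Type*} (P : Pregeometry X) (δ : X → X) : Prop :=
  ∀ A B : Set X, clRank P.cl (δ '' A) (A ∪ B ∪ δ '' B) ≤ clRank P.cl A B

/-- The `δ`-closure operator: `a ∈ cl^δ(B)` iff `rk(J^∞(a) | J^∞(B))` is finite. -/
noncomputable def clDelta {X : Type*} (P : Pregeometry X) (δ : X → X) : Set X → Set X :=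
  fun B => {a | clRank P.cl (Jinf δ {a}) (Jinf δ B) < Cardinal.aleph0}

section Aux

variable {X : Type*}

lemma mk_le_clRank (cl : Set X → Set X) {A B S : Set X} (hS : S ⊆ A)
    (hind : clIndep cl B S) : Cardinal.mk S ≤ clRank cl A B :=
  le_ciSup (Cardinal.bddAbove_range _)
    (⟨S, hS, hind⟩ : {S : Set X // S ⊆ A ∧ clIndep cl B S})

lemma clRank_singleton_eq_zero (P : Pregeometry X) {c : X} {C : Set X} (h : c ∈ P.cl C) :
    clRank P.cl {c} C = 0 := by
  refine le_antisymm (ciSup_le' ?_) zero_le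
  rintro ⟨S, hS, hind⟩
  have hempty : S = ∅ := by
    ext x
    simp only [Set.mem_empty_iff_false, iff_false]
    intro hx
    have hxc : x = c := hS hx
    subst hxc
    exact hind x hx (P.mono C _ Set.subset_union_left h)
  simp [hempty]

/-- Consequence of quasi-endomorphism: closure is (almost) preserved by `δ`. -/
lemma qe_step {P : Pregeometry X} {δ : X → X} (hδ : IsQuasiEndo P δ) {c : X} {C : Set X}
    (h : c ∈ P.cl C) : δ c ∈ P.cl (C ∪ δ '' C) := by
  have h0 : clRank P.cl (δ '' {c}) ({c} ∪ C ∪ δ '' C) = 0 :=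
    le_antisymm ((hδ {c} C).trans_eq (clRank_singleton_eq_zero P h)) zero_le
  by_cases hmem : δ c ∈ P.cl ({c} ∪ C ∪ δ '' C)
  · have hsub : ({c} : Set X) ∪ C ∪ δ '' C ⊆ P.cl (C ∪ δ '' C) := by
      rintro x ((hx | hx) | hx)
      · rcases hx with rfl
        exact P.mono C _ Set.subset_union_left h
      · exact P.subset_cl _ (Or.inl hx)
      · exact P.subset_cl _ (Or.inr hx)
    have := P.mono _ _ hsub hmem
    rwa [P.cl_cl] at this
  · exfalso
    have hind : clIndep P.cl ({c} ∪ C ∪ δ '' C) {δ c} := by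
      rintro x rfl
      simpa using hmem
    have hle := mk_le_clRank P.cl (by simp : ({δ c} : Set X) ⊆ δ '' {c}) hind
    rw [h0] at hle
    simp at hle

/-- A chain-independent finite sequence is independent. -/
lemma chain_indep (P : Pregeometry X) (B : Set X) (s : ℕ → X) :
    ∀ N : ℕ, (∀ i ≤ N, s i ∉ P.cl (B ∪ s '' {j | j < i})) →
      clIndep P.cl B (s '' {i | i ≤ N}) := by
  intro N
  induction N with
  | zero =>
    intro h x hx
    obtain ⟨i, hi, rfl⟩ := hx
    obtain rfl : i = 0 := Nat.le_zero.mp hi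
    have h0 := h 0 le_rfl
    refine fun hc => h0 (P.mono _ _ ?_ hc)
    apply Set.union_subset Set.subset_union_left
    intro y hy
    rcases hy with ⟨⟨j, hj, rfl⟩, hne⟩
    obtain rfl : j = 0 := Nat.le_zero.mp hj
    exact absurd rfl hne
  | succ N ih =>
    intro h
    have ihN := ih (fun i hi => h i (hi.trans (Nat.le_succ N)))
    have hTsplit : s '' {i | i ≤ N + 1} = s '' {i | i ≤ N} ∪ {s (N + 1)} := by
      rw [show {i : ℕ | i ≤ N + 1} = {i | i ≤ N} ∪ {N + 1} by
        ext j
        simp only [Set.mem_setOf_eq, Set.mem_union, Set.mem_singleton_iff]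
        omega]
      rw [Set.image_union, Set.image_singleton]
    intro x hx
    obtain ⟨i, hi, rfl⟩ := hx
    rcases Nat.lt_succ_iff_lt_or_eq.mp (Nat.lt_succ_of_le hi) with hiN | rfl
    · -- case i ≤ N
      have hiN' : i ≤ N := Nat.lt_succ_iff.mp hiN
      intro hcon
      set C := B ∪ (s '' {j | j ≤ N} \ {s i}) with hC
      have hcon' : s i ∈ P.cl (C ∪ {s (N + 1)}) := by
        refine P.mono _ _ ?_ hcon
        rw [hTsplit]
        rintro y (hy | ⟨(hy | hy), hne⟩)
        · exact Or.inl (Or.inl hy)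
        · exact Or.inl (Or.inr ⟨hy, hne⟩)
        · exact Or.inr hy
      have hni : s i ∉ P.cl C := ihN (s i) ⟨i, hiN', rfl⟩
      have hexch := P.exchange _ _ _ hcon' hni
      have : s (N + 1) ∈ P.cl (B ∪ s '' {j | j < N + 1}) := by
        refine P.mono _ _ ?_ hexch
        rw [show {j : ℕ | j < N + 1} = {j | j ≤ N} by ext j; simp [Nat.lt_succ_iff]]
        rintro y (((hy | hy) | hy))
        · exact Or.inl hy
        · exact Or.inr hy.1
        · rcases hy with rfl
          exact Or.inr ⟨i, hiN', rfl⟩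
      exact h (N + 1) le_rfl this
    · -- case i = N + 1
      intro hcon
      refine h (N + 1) le_rfl (P.mono _ _ ?_ hcon)
      rw [hTsplit, show {j : ℕ | j < N + 1} = {j | j ≤ N} by ext j; simp [Nat.lt_succ_iff]]
      rintro y (hy | ⟨(hy | hy), hne⟩)
      · exact Or.inl hy
      · exact Or.inr hy
      · rcases hy with rfl; exact absurd rfl hne

lemma Jlt_singleton (δ : X → X) (a : X) (n : ℕ) :
    Jlt δ {a} n = (fun i : ℕ => δ^[i] a) '' {i | i < n} := by
  simp [Jlt]

lemma Jle_mono (δ : X → X) (B : Set X) {m m' : ℕ} (h : m ≤ m') :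
    Jle δ B m ⊆ Jle δ B m' := by
  intro x hx
  simp only [Jle, Set.mem_iUnion, Set.mem_image] at hx ⊢
  obtain ⟨b, hb, i, hi, rfl⟩ := hx
  exact ⟨b, hb, i, hi.trans h, rfl⟩

lemma image_Jle_subset (δ : X → X) (B : Set X) (m : ℕ) :
    δ '' Jle δ B m ⊆ Jle δ B (m + 1) := by
  rintro x ⟨y, hy, rfl⟩
  simp only [Jle, Set.mem_iUnion, Set.mem_image] at hy ⊢
  obtain ⟨b, hb, i, hi, rfl⟩ := hy
  exact ⟨b, hb, i + 1, Nat.succ_le_succ hi, Function.iterate_succ_apply' δ i b⟩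

lemma image_Jlt_subset (δ : X → X) (a : X) (n : ℕ) :
    δ '' Jlt δ {a} n ⊆ Jlt δ {a} n ∪ {δ^[n] a} := by
  rintro x ⟨y, hy, rfl⟩
  rw [Jlt_singleton] at hy ⊢
  obtain ⟨i, hi, rfl⟩ := hy
  rcases Nat.lt_or_ge (i + 1) n with h | h
  · exact Or.inl ⟨i + 1, h, Function.iterate_succ_apply' δ i a⟩
  · have hin : i + 1 = n := le_antisymm hi h
    refine Or.inr ?_
    rw [Set.mem_singleton_iff, ← hin]
    exact (Function.iterate_succ_apply' δ i a).symm

end Aux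

/-- If `a ∈ cl^δ(B)`, then there are `n, m` such that
`δᵏ a ∈ cl(J^{n-1}(a) ∪ J^{m+k}(B))` for all `k ≥ n`. -/
theorem clDelta_jet_bound {X : Type*} (P : Pregeometry X) (δ : X → X)
    (hδ : IsQuasiEndo P δ) (a : X) (B : Set X)
    (ha : a ∈ clDelta P δ B) :
    ∃ n m : ℕ, ∀ k : ℕ, n ≤ k →
      δ^[k] a ∈ P.cl (Jlt δ {a} n ∪ Jle δ B (m + k)) := by
  classical
  set s : ℕ → X := fun i => δ^[i] a with hs
  -- Step 1: some δⁿ a falls in the closure of the earlier jet together with J^∞(B).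
  have key : ∃ n, δ^[n] a ∈ P.cl (Jlt δ {a} n ∪ Jinf δ B) := by
    by_contra hcon
    push_neg at hcon
    obtain ⟨N, hN⟩ := Cardinal.lt_aleph0.mp ha
    have hchain : ∀ i ≤ N, s i ∉ P.cl (Jinf δ B ∪ s '' {j | j < i}) := by
      intro i _
      rw [Set.union_comm, ← Jlt_singleton]
      exact hcon i
    have hind := chain_indep P (Jinf δ B) s N hchain
    have hsub : s '' {i | i ≤ N} ⊆ Jinf δ {a} := by
      rintro x ⟨i, _, rfl⟩
      simp only [Jinf, Set.mem_iUnion, Set.mem_range]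
      exact ⟨a, rfl, i, rfl⟩
    have hle := mk_le_clRank P.cl hsub hind
    rw [hN] at hle
    -- the s i, i ≤ N, are distinct
    have hne : ∀ i j : ℕ, j < i → s i ≠ s j := by
      intro i j hj heq
      apply hcon i
      show s i ∈ _
      rw [heq]
      refine P.subset_cl _ (Or.inl ?_)
      rw [Jlt_singleton]
      exact ⟨j, hj, rfl⟩
    have hinjf : Function.Injective
        (fun i : Fin (N + 1) => (⟨s i.1, ⟨i.1, Nat.lt_succ_iff.mp i.2, rfl⟩⟩ :
          (s '' {i | i ≤ N}))) := by
      intro i j hij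
      have : s i.1 = s j.1 := congrArg Subtype.val hij
      rcases lt_trichotomy i.1 j.1 with h | h | h
      · exact absurd this.symm (hne j.1 i.1 h)
      · exact Fin.ext h
      · exact absurd this (hne i.1 j.1 h)
    have hfin : (s '' {i | i ≤ N}).Finite :=
      Cardinal.lt_aleph0_iff_set_finite.mp (hle.trans_lt (Cardinal.nat_lt_aleph0 N))
    haveI : Finite ↥(s '' {i | i ≤ N}) := hfin.to_subtype
    have hcard1 : Nat.card ↥(s '' {i | i ≤ N}) ≤ N := by
      have := Cardinal.toNat_le_toNat hle (Cardinal.nat_lt_aleph0 N)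
      simpa [Nat.card] using this
    have hcard2 : N + 1 ≤ Nat.card ↥(s '' {i | i ≤ N}) := by
      have := Nat.card_le_card_of_injective _ hinjf
      rwa [Nat.card_eq_fintype_card, Fintype.card_fin] at this
    omega
  obtain ⟨n, hn⟩ := key
  -- Step 2: finitary reduction to a finite jet of B.
  obtain ⟨F, hF, hFcl⟩ := P.finitary _ _ hn
  have hchoice : ∀ x : X, ∃ m : ℕ, x ∈ Jinf δ B → x ∈ Jle δ B m := by
    intro x
    by_cases hx : x ∈ Jinf δ B
    · simp only [Jinf, Set.mem_iUnion, Set.mem_range] at hx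
      obtain ⟨b, hb, i, rfl⟩ := hx
      exact ⟨i, fun _ => by
        simp only [Jle, Set.mem_iUnion, Set.mem_image]
        exact ⟨b, hb, i, Set.mem_setOf_eq ▸ le_rfl, rfl⟩⟩
    · exact ⟨0, fun h => absurd h hx⟩
  choose g hg using hchoice
  set m := F.sup g with hm
  have hFsub : ↑F ⊆ Jlt δ {a} n ∪ Jle δ B m := by
    intro x hx
    rcases hF hx with h | h
    · exact Or.inl h
    · exact Or.inr (Jle_mono δ B (Finset.le_sup hx) (hg x h))
  have h0 : δ^[n] a ∈ P.cl (Jlt δ {a} n ∪ Jle δ B m) := P.mono _ _ hFsub hFcl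
  -- Step 3: propagate with the quasi-endomorphism property.
  have main : ∀ j : ℕ, δ^[n + j] a ∈ P.cl (Jlt δ {a} n ∪ Jle δ B (m + j)) := by
    intro j
    induction j with
    | zero => simpa using h0
    | succ j ih =>
      have step := qe_step hδ ih
      have heq : δ (δ^[n + j] a) = δ^[n + (j + 1)] a := by
        rw [show n + (j + 1) = (n + j) + 1 by omega, Function.iterate_succ_apply']
      rw [heq] at step
      have hsub : (Jlt δ {a} n ∪ Jle δ B (m + j)) ∪ δ '' (Jlt δ {a} n ∪ Jle δ B (m + j)) ⊆
          P.cl (Jlt δ {a} n ∪ Jle δ B (m + (j + 1))) := by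
        rintro x (hx | hx)
        · rcases hx with hx | hx
          · exact P.subset_cl _ (Or.inl hx)
          · exact P.subset_cl _ (Or.inr (Jle_mono δ B (by omega) hx))
        · rw [Set.image_union] at hx
          rcases hx with hx | hx
          · rcases image_Jlt_subset δ a n hx with hy | hy
            · exact P.subset_cl _ (Or.inl hy)
            · rcases hy with rfl
              refine P.mono _ _ ?_ h0
              exact Set.union_subset (fun y hy => Or.inl hy)
                (fun y hy => Or.inr (Jle_mono δ B (by omega) hy))
          · have := image_Jle_subset δ B (m + j) hx
            exact P.subset_cl _ (Or.inr (Jle_mono δ B (by omega) this))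
      have := P.mono _ _ hsub step
      rwa [P.cl_cl] at this
  refine ⟨n, m, fun k hk => ?_⟩
  obtain ⟨j, rfl⟩ : ∃ j, k = n + j := ⟨k - n, by omega⟩
  refine P.mono _ _ ?_ (main j)
  exact Set.union_subset (fun y hy => Or.inl hy)
    (fun y hy => Or.inr (Jle_mono δ B (by omega) hy))
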